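/- Let ν : ℕ → ℤ, m_k = k + ⌈max(0, log|ν(k)|)⌉, K ⊂ ℂ compact, and k₀ ∈ ℕ with k₀ ≥ e·|z| for all z ∈ K. Then for every z ∈ K, ∑_{k=k₀}^∞ |ν(k)| · |Log E_{m_k}(z/k)| ≤ (3/2) ∑_{k=k₀}^∞ e^{−(k+1)}, where Log denotes the principal logarithm (well-defined since |E_{m_k}(z/k) − 1| ≤ e^{−2} < 1). -/

import Mathlib

/-- The Weierstrass factor `E_m(z) = (1 - z) * exp(∑_{j=1}^m z^j / j)`. -/
noncomputable def weierstrassFactor (m : ℕ) (z : ℂ) : ℂ :=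
  (1 - z) * Complex.exp (∑ j ∈ Finset.Icc 1 m, z ^ j / j)

/-- `m_k^ν = k + ⌈max(0, log |ν(k)|)⌉`. -/
noncomputable def mExp (ν : ℕ → ℤ) (k : ℕ) : ℕ :=
  k + ⌈max 0 (Real.log |(ν k : ℝ)|)⌉₊

lemma summable_tail_norm {m : ℕ} {w : ℂ} (hw : ‖w‖ < 1) :
    Summable (fun j : ℕ ↦ ‖w ^ (m + 1 + j) / ((m + 1 + j : ℕ) : ℂ)‖) := by
  refine Summable.of_nonneg_of_le (fun _ => norm_nonneg _) (fun j => ?_)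
    ((summable_geometric_of_lt_one (norm_nonneg w) hw).mul_left (‖w‖ ^ (m + 1)))
  rw [norm_div, norm_pow]
  have h1 : (1 : ℝ) ≤ ‖((m + 1 + j : ℕ) : ℂ)‖ := by
    rw [Complex.norm_natCast]; exact_mod_cast Nat.one_le_iff_ne_zero.2 (by omega)
  calc ‖w‖ ^ (m + 1 + j) / ‖((m + 1 + j : ℕ) : ℂ)‖
      ≤ ‖w‖ ^ (m + 1 + j) := div_le_self (pow_nonneg (norm_nonneg w) _) h1
    _ = ‖w‖ ^ (m + 1) * ‖w‖ ^ j := pow_add _ _ _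

lemma wf_eq_exp {m : ℕ} {w : ℂ} (hw : ‖w‖ < 1) :
    weierstrassFactor m w
      = Complex.exp (-∑' j : ℕ, w ^ (m + 1 + j) / ((m + 1 + j : ℕ) : ℂ)) := by
  set f : ℕ → ℂ := fun n ↦ w ^ n / n with hf
  have h1 : HasSum f (-Complex.log (1 - w)) := Complex.hasSum_taylorSeries_neg_log hw
  have hsum : Summable f := h1.summable
  have h2 : ∑ i ∈ Finset.range (m + 1), f i + ∑' j : ℕ, f (j + (m + 1))
      = -Complex.log (1 - w) := by
    rw [Summable.sum_add_tsum_nat_add' ((summable_nat_add_iff (m + 1)).2 hsum), h1.tsum_eq]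
  have h3 : (∑' j : ℕ, f (j + (m + 1)))
      = ∑' j : ℕ, w ^ (m + 1 + j) / ((m + 1 + j : ℕ) : ℂ) := by
    congr 1; funext j
    simp only [hf]
    rw [add_comm j (m + 1)]
  have h4 : ∑ i ∈ Finset.range (m + 1), f i = ∑ j ∈ Finset.Icc 1 m, w ^ j / (j : ℂ) := by
    have hins : Finset.range (m + 1) = insert 0 (Finset.Icc 1 m) := by
      ext x; simp; omega
    rw [hins, Finset.sum_insert (by simp)]
    simp [hf]
  have hne : (1 : ℂ) - w ≠ 0 := by
    intro h
    rw [sub_eq_zero] at h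
    rw [← h] at hw
    simp at hw
  have h5 : ∑ j ∈ Finset.Icc 1 m, w ^ j / (j : ℂ)
      = -Complex.log (1 - w) - ∑' j : ℕ, w ^ (m + 1 + j) / ((m + 1 + j : ℕ) : ℂ) := by
    rw [← h4, ← h3]
    linear_combination h2
  rw [weierstrassFactor, h5]
  have hre : -Complex.log (1 - w) - (∑' j : ℕ, w ^ (m + 1 + j) / ((m + 1 + j : ℕ) : ℂ))
      = (-∑' j : ℕ, w ^ (m + 1 + j) / ((m + 1 + j : ℕ) : ℂ)) + (-Complex.log (1 - w)) := by
    ring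
  rw [hre, Complex.exp_add, Complex.exp_neg (Complex.log (1 - w)), Complex.exp_log hne]
  field_simp

lemma tail_norm_le {m : ℕ} {w : ℂ} (hm : 1 ≤ m) (hw : ‖w‖ ≤ 1 / 2) :
    ‖∑' j : ℕ, w ^ (m + 1 + j) / ((m + 1 + j : ℕ) : ℂ)‖ ≤ ‖w‖ ^ (m + 1) := by
  have hw1 : ‖w‖ < 1 := lt_of_le_of_lt hw (by norm_num)
  have hgeo : Summable (fun j : ℕ ↦ ‖w‖ ^ (m + 1) * ((1 / 2) ^ j / 2)) := by
    refine Summable.mul_left _ ?_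
    exact ((summable_geometric_of_lt_one (by norm_num) (by norm_num : (1:ℝ)/2 < 1)).div_const 2)
  refine (norm_tsum_le_tsum_norm (summable_tail_norm hw1)).trans ?_
  have hterm : ∀ j : ℕ, ‖w ^ (m + 1 + j) / ((m + 1 + j : ℕ) : ℂ)‖
      ≤ ‖w‖ ^ (m + 1) * ((1 / 2) ^ j / 2) := by
    intro j
    rw [norm_div, norm_pow, Complex.norm_natCast]
    have h2 : (2 : ℝ) ≤ (m + 1 + j : ℕ) := by exact_mod_cast by omega
    calc ‖w‖ ^ (m + 1 + j) / ((m + 1 + j : ℕ) : ℝ)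
        ≤ (‖w‖ ^ (m + 1) * (1 / 2) ^ j) / 2 := by
          rw [pow_add]
          gcongr
      _ = ‖w‖ ^ (m + 1) * ((1 / 2) ^ j / 2) := by ring
  refine (Summable.tsum_le_tsum hterm (summable_tail_norm hw1) hgeo).trans ?_
  rw [tsum_mul_left, tsum_div_const, tsum_geometric_of_lt_one (by norm_num) (by norm_num)]
  norm_num

lemma exp_one_ge_two : (2 : ℝ) ≤ Real.exp 1 := by
  have := Real.add_one_le_exp (1 : ℝ)
  linarith

theorem tail_log_sum_bound (ν : ℕ → ℤ) (K : Set ℂ) (hK : IsCompact K)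
    (k₀ : ℕ) (hk₀ : 1 ≤ k₀) (hk₀K : ∀ z ∈ K, Real.exp 1 * ‖z‖ ≤ k₀)
    (z : ℂ) (hz : z ∈ K) :
    ∑' k : ℕ, |(ν (k₀ + k) : ℝ)| *
        ‖Complex.log (weierstrassFactor (mExp ν (k₀ + k)) (z / (k₀ + k)))‖ ≤
      (3 / 2) * ∑' k : ℕ, Real.exp (-(((k₀ + k : ℕ) : ℝ) + 1)) := by
  have hzK := hk₀K z hz
  have hep : (0 : ℝ) < Real.exp 1 := Real.exp_pos 1
  have key : ∀ i : ℕ, |(ν (k₀ + i) : ℝ)| *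
      ‖Complex.log (weierstrassFactor (mExp ν (k₀ + i)) (z / (k₀ + i)))‖ ≤
      (3 / 2) * Real.exp (-(((k₀ + i : ℕ) : ℝ) + 1)) := by
    intro i
    set k : ℕ := k₀ + i with hk
    have hkc : ((k₀ : ℂ) + (i : ℂ)) = ((k : ℕ) : ℂ) := by push_cast [hk]; ring
    rw [hkc]
    set w : ℂ := z / ((k : ℕ) : ℂ) with hwdef
    have hk1 : 1 ≤ k := le_trans hk₀ (Nat.le_add_right _ _)
    have hkpos : (0 : ℝ) < (k : ℝ) := by exact_mod_cast hk1
    have hk₀k : (k₀ : ℝ) ≤ (k : ℝ) := by exact_mod_cast Nat.le_add_right k₀ i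
    have hwe : ‖w‖ ≤ (Real.exp 1)⁻¹ := by
      rw [hwdef, norm_div, Complex.norm_natCast, div_le_iff₀ hkpos]
      calc ‖z‖ = (Real.exp 1)⁻¹ * (Real.exp 1 * ‖z‖) := by field_simp
        _ ≤ (Real.exp 1)⁻¹ * (k : ℝ) :=
            mul_le_mul_of_nonneg_left (hzK.trans hk₀k) (inv_nonneg.2 hep.le)
        _ = (Real.exp 1)⁻¹ * (k : ℝ) := rfl
    have hwh : ‖w‖ ≤ 1 / 2 := by
      refine hwe.trans ?_
      rw [inv_le_comm₀ (by linarith) (by norm_num)]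
      simpa using exp_one_ge_two
    have hw1 : ‖w‖ < 1 := lt_of_le_of_lt hwh (by norm_num)
    set m : ℕ := mExp ν k with hm
    have hmk : m = k + ⌈max 0 (Real.log |(ν k : ℝ)|)⌉₊ := rfl
    have hm1 : 1 ≤ m := le_trans hk1 (by rw [hmk]; exact Nat.le_add_right _ _)
    set R : ℂ := ∑' j : ℕ, w ^ (m + 1 + j) / ((m + 1 + j : ℕ) : ℂ) with hR
    have hRle : ‖R‖ ≤ ‖w‖ ^ (m + 1) := tail_norm_le hm1 hwh
    have hwm : ‖w‖ ^ (m + 1) ≤ (1 / 2 : ℝ) ^ (m + 1) := pow_le_pow_left₀ (norm_nonneg w) hwh _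
    have hRsmall : ‖R‖ ≤ 1 / 4 := by
      refine hRle.trans (hwm.trans ?_)
      calc ((1:ℝ)/2) ^ (m+1) ≤ (1/2) ^ 2 :=
            pow_le_pow_of_le_one (by norm_num) (by norm_num) (by omega)
        _ = 1 / 4 := by norm_num
    have hπ : (3 : ℝ) < Real.pi := Real.pi_gt_three
    have hImR : |(-R).im| ≤ ‖R‖ := by
      rw [← norm_neg R]; exact Complex.abs_im_le_norm (-R)
    have hlog : Complex.log (weierstrassFactor m w) = -R := by
      rw [wf_eq_exp hw1, ← hR, Complex.log_exp]
      · rw [abs_le] at hImR; linarith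
      · rw [abs_le] at hImR; linarith
    have hnlog : ‖Complex.log (weierstrassFactor m w)‖ = ‖R‖ := by rw [hlog, norm_neg]
    by_cases hν0 : ν k = 0
    · rw [hν0]
      simp only [Int.cast_zero, abs_zero, zero_mul]
      positivity
    · have hνpos : (0 : ℝ) < |(ν k : ℝ)| := by
        simp only [abs_pos]
        exact_mod_cast hν0
      set c : ℕ := ⌈max 0 (Real.log |(ν k : ℝ)|)⌉₊ with hc
      have hνc : |(ν k : ℝ)| ≤ Real.exp c := by
        rw [← Real.exp_log hνpos]
        exact Real.exp_le_exp.2 ((le_max_right _ _).trans (Nat.le_ceil _))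
      have hwexp : ‖w‖ ^ (m + 1) ≤ Real.exp (-((k : ℝ) + 1)) * Real.exp (-(c : ℝ)) := by
        calc ‖w‖ ^ (m + 1) ≤ ((Real.exp 1)⁻¹) ^ (m + 1) := pow_le_pow_left₀ (norm_nonneg w) hwe _
          _ = Real.exp (-1) ^ (m + 1) := by rw [← Real.exp_neg]
          _ = Real.exp (((m : ℝ) + 1) * (-1)) := by
              rw [← Real.exp_nat_mul]
              push_cast
              ring_nf
          _ = Real.exp (-((k : ℝ) + 1)) * Real.exp (-(c : ℝ)) := by
              rw [← Real.exp_add]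
              congr 1
              have : (m : ℝ) = (k : ℝ) + (c : ℝ) := by rw [hmk]; push_cast; ring
              rw [this]; ring
      calc |(ν k : ℝ)| * ‖Complex.log (weierstrassFactor m w)‖
          = |(ν k : ℝ)| * ‖R‖ := by rw [hnlog]
        _ ≤ Real.exp c * (Real.exp (-((k : ℝ) + 1)) * Real.exp (-(c : ℝ))) := by
            exact mul_le_mul hνc (hRle.trans hwexp) (norm_nonneg R) (Real.exp_pos _).le
        _ = Real.exp (-((k : ℝ) + 1)) := by
            rw [← Real.exp_add, ← Real.exp_add]
            congr 1
            ring
        _ ≤ (3 / 2) * Real.exp (-((k : ℝ) + 1)) := by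
            nlinarith [Real.exp_pos (-((k : ℝ) + 1))]
  have hsum2 : Summable (fun i : ℕ ↦ Real.exp (-(((k₀ + i : ℕ) : ℝ) + 1))) := by
    have heq : (fun i : ℕ ↦ Real.exp (-(((k₀ + i : ℕ) : ℝ) + 1)))
        = fun i : ℕ ↦ Real.exp (-((k₀ : ℝ) + 1)) * (Real.exp (-1)) ^ i := by
      funext i
      rw [← Real.exp_nat_mul, ← Real.exp_add]
      congr 1
      push_cast
      ring
    rw [heq]
    refine Summable.mul_left _ (summable_geometric_of_lt_one (Real.exp_pos _).le ?_)
    rw [Real.exp_lt_one_iff]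
    norm_num
  have hsumL : Summable (fun i : ℕ ↦ |(ν (k₀ + i) : ℝ)| *
      ‖Complex.log (weierstrassFactor (mExp ν (k₀ + i)) (z / (k₀ + i)))‖) :=
    Summable.of_nonneg_of_le (fun i => mul_nonneg (abs_nonneg _) (norm_nonneg _)) key
      (hsum2.mul_left (3 / 2))
  rw [← tsum_mul_left]
  exact Summable.tsum_le_tsum key hsumL (hsum2.mul_left _)
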